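/- Let r > 0 and let p, q be real numbers with |p - q| ≤ r. If t is drawn uniformly at random from the interval [0, r), then the probability that ⌊(p - t)/r⌋ ≠ ⌊(q - t)/r⌋ is exactly |p - q| / r. -/

import Mathlib

open MeasureTheory

/-- Key lemma: the unnormalized measure of the separation set within `[0, r)`. -/
lemma one_dim_grid_key (r p q : ℝ) (hr : 0 < r) (hq : q ≤ p) (hd : p - q ≤ r) :
    volume ({t : ℝ | ⌊(p - t) / r⌋ ≠ ⌊(q - t) / r⌋} ∩ Set.Ico (0 : ℝ) r)
      = ENNReal.ofReal (p - q) := by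
  set k₀ : ℤ := ⌊q / r⌋ with hk₀
  set a : ℝ := q - k₀ * r with ha
  have ha0 : 0 ≤ a := by
    have := Int.floor_le (q / r)
    have : (k₀ : ℝ) * r ≤ q := by
      rw [hk₀]
      calc (⌊q / r⌋ : ℝ) * r ≤ (q / r) * r := by
            apply mul_le_mul_of_nonneg_right (Int.floor_le _) hr.le
        _ = q := by field_simp
    linarith
  have har : a < r := by
    have : q < (k₀ + 1 : ℝ) * r := by
      have h1 : q / r < k₀ + 1 := Int.lt_floor_add_one (q / r)
      calc q = (q / r) * r := by field_simp
        _ < (k₀ + 1 : ℝ) * r := by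
            apply mul_lt_mul_of_pos_right _ hr
            exact_mod_cast h1
    linarith
  set d : ℝ := p - q with hdd
  have hd0 : 0 ≤ d := by linarith
  -- characterize membership for t ∈ [0, r)
  have hiff : ∀ t ∈ Set.Ico (0:ℝ) r, (⌊(p - t) / r⌋ ≠ ⌊(q - t) / r⌋ ↔
      (t ∈ Set.Ioc a (a + d) ∨ t ∈ Set.Icc 0 (a + d - r))) := by
    intro t ht
    obtain ⟨ht0, htr⟩ := ht
    constructor
    · intro hne
      have hmono : ⌊(q - t)/r⌋ ≤ ⌊(p - t)/r⌋ :=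
        Int.floor_le_floor (by gcongr ?_ / r; linarith)
      have hlt : ⌊(q - t)/r⌋ < ⌊(p - t)/r⌋ := lt_of_le_of_ne hmono (Ne.symm hne)
      set k : ℤ := ⌊(p - t)/r⌋ with hk
      have hk1 : (k : ℝ) ≤ (p - t)/r := Int.floor_le _
      have hk2 : (q - t)/r < k := by
        have : ⌊(q - t)/r⌋ + 1 ≤ k := hlt
        have h2 : (q - t)/r < ⌊(q - t)/r⌋ + 1 := Int.lt_floor_add_one _
        calc (q - t)/r < (⌊(q - t)/r⌋ : ℝ) + 1 := h2
          _ ≤ (k : ℝ) := by exact_mod_cast this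
      -- convert to interval
      have hT1 : t ≤ p - k * r := by
        have h := (le_div_iff₀ hr).mp hk1
        linarith
      have hT2 : q - k * r < t := by
        have h := (div_lt_iff₀ hr).mp hk2
        linarith
      -- k is k₀ or k₀ + 1
      have hklb : k₀ ≤ k := by
        have hq_lt : q < (k + 1 : ℝ) * r := by nlinarith
        have : q / r < (k + 1 : ℝ) := by
          rw [div_lt_iff₀ hr]; linarith
        have : k₀ < k + 1 := by
          rw [hk₀]
          exact_mod_cast Int.floor_lt.mpr (by exact_mod_cast this)
        omega
      have hkub : k ≤ k₀ + 1 := by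
        have hkr : (k : ℝ) * r ≤ q + r := by nlinarith
        have : (k - 1 : ℝ) ≤ q / r := by
          rw [le_div_iff₀ hr]; nlinarith
        have : (k - 1 : ℤ) ≤ k₀ := by
          rw [hk₀]
          apply Int.le_floor.mpr
          exact_mod_cast this
        omega
      have hcases : k = k₀ ∨ k = k₀ + 1 := by omega
      rcases hcases with hkk | hkk
      · rw [hkk] at hT1 hT2
        left
        refine ⟨by simp only [ha]; linarith, ?_⟩
        simp only [ha, hdd]; linarith
      · rw [hkk] at hT1 hT2
        push_cast at hT1 hT2
        right
        refine ⟨ht0, ?_⟩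
        simp only [ha, hdd]; linarith
    · intro hmem
      rcases hmem with ⟨h1, h2⟩ | ⟨h1, h2⟩
      · have hql : (q - t)/r < k₀ := by
          rw [div_lt_iff₀ hr]; simp only [ha] at h1; linarith
        have hpl : (k₀ : ℝ) ≤ (p - t)/r := by
          rw [le_div_iff₀ hr]; simp only [ha, hdd] at h2; linarith
        have hA : ⌊(q - t)/r⌋ < k₀ := Int.floor_lt.mpr (by exact_mod_cast hql)
        have hB : k₀ ≤ ⌊(p - t)/r⌋ := Int.le_floor.mpr (by exact_mod_cast hpl)
        omega
      · have hql : (q - t)/r < (k₀ + 1 : ℤ) := by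
          rw [div_lt_iff₀ hr]; push_cast; linarith
        have hpl : ((k₀ + 1 : ℤ) : ℝ) ≤ (p - t)/r := by
          rw [le_div_iff₀ hr]; push_cast; simp only [ha, hdd] at h2; linarith
        have hA : ⌊(q - t)/r⌋ < k₀ + 1 := Int.floor_lt.mpr (by exact_mod_cast hql)
        have hB : (k₀ + 1 : ℤ) ≤ ⌊(p - t)/r⌋ := Int.le_floor.mpr hpl
        omega
  -- set equality
  have hset : {t : ℝ | ⌊(p - t) / r⌋ ≠ ⌊(q - t) / r⌋} ∩ Set.Ico (0 : ℝ) r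
      = (Set.Ioc a (a + d) ∩ Set.Iio r) ∪ Set.Icc 0 (a + d - r) := by
    ext t
    simp only [Set.mem_inter_iff, Set.mem_setOf_eq, Set.mem_Ico, Set.mem_union,
      Set.mem_Ioc, Set.mem_Iio, Set.mem_Icc]
    constructor
    · rintro ⟨hne, ht0, htr⟩
      rcases (hiff t ⟨ht0, htr⟩).mp hne with h | h
      · exact Or.inl ⟨h, htr⟩
      · exact Or.inr h
    · rintro (⟨⟨h1, h2⟩, h3⟩ | ⟨h1, h2⟩)
      · have ht : t ∈ Set.Ico (0:ℝ) r := ⟨by linarith, h3⟩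
        exact ⟨(hiff t ht).mpr (Or.inl ⟨h1, h2⟩), ht.1, ht.2⟩
      · have ht : t ∈ Set.Ico (0:ℝ) r := ⟨h1, by linarith⟩
        exact ⟨(hiff t ht).mpr (Or.inr ⟨h1, h2⟩), ht.1, ht.2⟩
  rw [hset]
  have hdisj : Disjoint (Set.Ioc a (a + d) ∩ Set.Iio r) (Set.Icc 0 (a + d - r)) := by
    rw [Set.disjoint_left]
    rintro t ⟨⟨h1, _⟩, _⟩ ⟨_, h4⟩
    linarith
  rw [measure_union hdisj measurableSet_Icc]
  have hm1 : volume (Set.Ioc a (a + d) ∩ Set.Iio r) = ENNReal.ofReal (min (a + d) r - a) := by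
    apply le_antisymm
    · calc volume (Set.Ioc a (a + d) ∩ Set.Iio r) ≤ volume (Set.Ioc a (min (a + d) r)) := by
            apply measure_mono
            rintro t ⟨⟨h1, h2⟩, h3⟩
            exact ⟨h1, le_min h2 h3.le⟩
        _ = ENNReal.ofReal (min (a + d) r - a) := Real.volume_Ioc
    · calc ENNReal.ofReal (min (a + d) r - a) = volume (Set.Ioo a (min (a + d) r)) :=
            Real.volume_Ioo.symm
        _ ≤ volume (Set.Ioc a (a + d) ∩ Set.Iio r) := by
            apply measure_mono
            rintro t ⟨h1, h2⟩
            exact ⟨⟨h1, le_of_lt (lt_of_lt_of_le h2 (min_le_left _ _))⟩,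
              lt_of_lt_of_le h2 (min_le_right _ _)⟩
  rw [hm1, Real.volume_Icc]
  rcases le_or_gt (a + d) r with h | h
  · rw [min_eq_left h]
    have : ENNReal.ofReal (a + d - r - 0) = 0 := by
      apply ENNReal.ofReal_eq_zero.mpr; linarith
    rw [this, add_zero]
    congr 1; ring
  · rw [min_eq_right h.le, ← ENNReal.ofReal_add (by linarith) (by linarith)]
    congr 1; ring

theorem one_dim_grid_separation (r p q : ℝ) (hr : 0 < r) (hpq : |p - q| ≤ r) :
    ((ENNReal.ofReal r)⁻¹ • volume.restrict (Set.Ico (0 : ℝ) r))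
      {t : ℝ | ⌊(p - t) / r⌋ ≠ ⌊(q - t) / r⌋} = ENNReal.ofReal (|p - q| / r) := by
  wlog hqp : q ≤ p generalizing p q
  · have h := this q p (by rwa [abs_sub_comm]) (le_of_not_ge hqp)
    have hsetcomm : {t : ℝ | ⌊(q - t) / r⌋ ≠ ⌊(p - t) / r⌋}
        = {t : ℝ | ⌊(p - t) / r⌋ ≠ ⌊(q - t) / r⌋} := by
      ext t; exact ne_comm
    rw [hsetcomm, abs_sub_comm q p] at h
    exact h
  have habs : |p - q| = p - q := abs_of_nonneg (by linarith)
  have hdr : p - q ≤ r := by rw [habs] at hpq; exact hpq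
  have hmeas : MeasurableSet {t : ℝ | ⌊(p - t) / r⌋ ≠ ⌊(q - t) / r⌋} := by
    have h1 : Measurable fun t : ℝ => ⌊(p - t) / r⌋ :=
      ((measurable_const.sub measurable_id).div_const r).floor
    have h2 : Measurable fun t : ℝ => ⌊(q - t) / r⌋ :=
      ((measurable_const.sub measurable_id).div_const r).floor
    exact (measurableSet_eq_fun h1 h2).compl
  rw [Measure.smul_apply, Measure.restrict_apply hmeas,
    one_dim_grid_key r p q hr hqp hdr, habs,
    ENNReal.ofReal_div_of_pos hr, ENNReal.div_eq_inv_mul, smul_eq_mul]
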